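/- arXiv:2106.07589 — 3 statements merged into one kernel-verified Lean document; each statement's English description precedes it below -/
import Mathlib

section
/- Let F be a function on the vertices of the triangular lattice (vertex set ℤ², with edges between (x,y) and (x',y') iff (x'-x, y'-y) ∈ {(1,0),(-1,0),(0,1),(0,-1),(1,1),(-1,-1)}) such that |F(u) - F(v)| = 1 whenever u and v are adjacent vertices lying in different level sets. Let S be a connected finite set of vertices, and let C be the unique infinite connected component of the complement of S. Then all vertices of C that are adjacent to S take values of F of the same parity, and any two adjacent such vertices have equal F-value; consequently at most one level-set component of F in the complement of S is exterior adjacent to S. -/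
/-- Adjacency in the triangular lattice on `ℤ²`. -/
def triAdj (u v : ℤ × ℤ) : Prop :=
  (v.1 - u.1, v.2 - u.2) ∈
    ({(1, 0), (-1, 0), (0, 1), (0, -1), (1, 1), (-1, -1)} : Set (ℤ × ℤ))

/-- Reachability between two vertices by a path staying inside the set `T`. -/
def reachIn (T : Set (ℤ × ℤ)) (u v : ℤ × ℤ) : Prop :=
  Relation.ReflTransGen (fun a b => triAdj a b ∧ a ∈ T ∧ b ∈ T) u v

lemma triAdj_symm {u v : ℤ × ℤ} (h : triAdj u v) : triAdj v u := by
  unfold triAdj at *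
  simp only [Set.mem_insert_iff, Set.mem_singleton_iff, Prod.mk.injEq] at *
  omega

lemma adj_e (x y : ℤ) : triAdj (x, y) (x+1, y) := by
  unfold triAdj
  simp only [Set.mem_insert_iff, Set.mem_singleton_iff, Prod.mk.injEq]
  omega

lemma adj_n (x y : ℤ) : triAdj (x, y) (x, y+1) := by
  unfold triAdj
  simp only [Set.mem_insert_iff, Set.mem_singleton_iff, Prod.mk.injEq]
  omega

lemma adj_ne (x y : ℤ) : triAdj (x, y) (x+1, y+1) := by
  unfold triAdj
  simp only [Set.mem_insert_iff, Set.mem_singleton_iff, Prod.mk.injEq]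
  omega

lemma cumul (g : ℤ → ZMod 2) : ∃ f : ℤ → ZMod 2, ∀ y : ℤ, f (y + 1) = f y + g y := by
  refine ⟨fun y => if 0 ≤ y then ∑ k ∈ Finset.range y.toNat, g k
                   else ∑ k ∈ Finset.range (-y).toNat, g (-((k:ℤ)+1)), ?_⟩
  intro y
  dsimp only
  rcases lt_trichotomy y (-1) with hy | hy | hy
  · have h1 : ¬ (0 ≤ y + 1) := by omega
    have h2 : ¬ (0 ≤ y) := by omega
    rw [if_neg h1, if_neg h2]
    have hn : (-y).toNat = (-(y+1)).toNat + 1 := by omega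
    rw [hn, Finset.sum_range_succ]
    have hlast : -((((-(y+1)).toNat : ℤ)) + 1) = y := by omega
    rw [hlast, add_assoc, CharTwo.add_self_eq_zero, add_zero]
  · subst hy
    have h1 : (0:ℤ) ≤ -1 + 1 := by omega
    have h2 : ¬ ((0:ℤ) ≤ -1) := by omega
    rw [if_pos h1, if_neg h2]
    norm_num
    rw [add_comm, CharTwo.add_self_eq_zero]
  · have h1 : 0 ≤ y + 1 := by omega
    have h2 : 0 ≤ y := by omega
    rw [if_pos h1, if_pos h2]
    have hn : (y+1).toNat = y.toNat + 1 := by omega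
    rw [hn, Finset.sum_range_succ, Int.toNat_of_nonneg h2]

lemma exists_potential (φ : ℤ × ℤ → ℤ × ℤ → ZMod 2)
    (hsymm : ∀ p q, φ p q = φ q p)
    (htri1 : ∀ x y : ℤ, φ (x,y) (x+1,y) + φ (x+1,y) (x+1,y+1) + φ (x,y) (x+1,y+1) = 0)
    (htri2 : ∀ x y : ℤ, φ (x,y) (x,y+1) + φ (x,y+1) (x+1,y+1) + φ (x,y) (x+1,y+1) = 0) :
    ∃ h : ℤ × ℤ → ZMod 2, ∀ p q, triAdj p q → φ p q = h p + h q := by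
  obtain ⟨b, hb⟩ := cumul (fun x => φ (x,0) (x+1,0))
  have H : ∀ x : ℤ, ∃ f : ℤ → ZMod 2, ∀ y, f (y+1) = f y + φ (x,y) (x,y+1) :=
    fun x => cumul (fun y => φ (x,y) (x,y+1))
  choose c hc using H
  set h : ℤ × ℤ → ZMod 2 := fun p => b p.1 + c p.1 p.2 + c p.1 0 with hh
  have Ev : ∀ x y : ℤ, h (x,y) + h (x,y+1) = φ (x,y) (x,y+1) := by
    intro x y
    simp only [hh]
    rw [hc x y]
    have : ∀ B C Z P : ZMod 2, (B + C + Z) + (B + (C + P) + Z) = P := by decide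
    exact this _ _ _ _
  have Eh : ∀ x y : ℤ, h (x,y) + h (x+1,y) = φ (x,y) (x+1,y) := by
    intro x
    have base : h (x,0) + h (x+1,0) = φ (x,0) (x+1,0) := by
      simp only [hh]
      rw [hb x]
      have : ∀ B Z P Z' : ZMod 2, (B + Z + Z) + ((B + P) + Z' + Z') = P := by decide
      exact this _ _ _ _
    have stepup : ∀ y : ℤ, h (x,y) + h (x+1,y) = φ (x,y) (x+1,y) →
        h (x,y+1) + h (x+1,y+1) = φ (x,y+1) (x+1,y+1) := by
      intro y ih
      have t1 := htri1 x y
      have t2 := htri2 x y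
      have e1 := Ev x y
      have e2 := Ev (x+1) y
      have key : ∀ h1 h2 h3 h4 A B D E G : ZMod 2,
          A + B + D = 0 → E + G + D = 0 → h1 + h2 = A → h1 + h3 = E → h2 + h4 = B →
          h3 + h4 = G := by decide
      exact key (h (x,y)) (h (x+1,y)) (h (x,y+1)) (h (x+1,y+1)) _ _ _ _ _ t1 t2 ih e1 e2
    have stepdown : ∀ y : ℤ, h (x,y) + h (x+1,y) = φ (x,y) (x+1,y) →
        h (x,y-1) + h (x+1,y-1) = φ (x,y-1) (x+1,y-1) := by
      intro y ih
      have hy : y - 1 + 1 = y := by ring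
      have t1 := htri1 x (y-1); rw [hy] at t1
      have t2 := htri2 x (y-1); rw [hy] at t2
      have e1 := Ev x (y-1); rw [hy] at e1
      have e2 := Ev (x+1) (y-1); rw [hy] at e2
      have key : ∀ h1 h2 h3 h4 A B D E G : ZMod 2,
          A + B + D = 0 → E + G + D = 0 → h3 + h4 = G → h1 + h3 = E → h2 + h4 = B →
          h1 + h2 = A := by decide
      exact key (h (x,y-1)) (h (x+1,y-1)) (h (x,y)) (h (x+1,y)) _ _ _ _ _ t1 t2 ih e1 e2
    intro y
    induction y using Int.induction_on with
    | zero => exact base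
    | succ n ih => exact stepup n ih
    | pred n ih => exact stepdown (-(n:ℤ)) ih
  have Ed : ∀ x y : ℤ, h (x,y) + h (x+1,y+1) = φ (x,y) (x+1,y+1) := by
    intro x y
    have t1 := htri1 x y
    have e1 := Eh x y
    have e2 := Ev (x+1) y
    have key : ∀ h1 h2 h4 A B D : ZMod 2,
        A + B + D = 0 → h1 + h2 = A → h2 + h4 = B → h1 + h4 = D := by decide
    exact key (h (x,y)) (h (x+1,y)) (h (x+1,y+1)) _ _ _ t1 e1 e2
  refine ⟨h, ?_⟩
  rintro ⟨px, py⟩ ⟨qx, qy⟩ hadj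
  unfold triAdj at hadj
  simp only [Set.mem_insert_iff, Set.mem_singleton_iff, Prod.mk.injEq] at hadj
  have epair : ∀ a b cx cy : ℤ, a = cx → b = cy → ((a,b) : ℤ×ℤ) = (cx,cy) := by
    intros; subst_vars; rfl
  rcases hadj with ⟨h1,h2⟩|⟨h1,h2⟩|⟨h1,h2⟩|⟨h1,h2⟩|⟨h1,h2⟩|⟨h1,h2⟩
  · rw [epair qx qy (px+1) py (by omega) (by omega)]
    exact (Eh px py).symm
  · rw [epair px py (qx+1) qy (by omega) (by omega), hsymm]
    exact (Eh qx qy).symm.trans (add_comm _ _)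
  · rw [epair qx qy px (py+1) (by omega) (by omega)]
    exact (Ev px py).symm
  · rw [epair px py qx (qy+1) (by omega) (by omega), hsymm]
    exact (Ev qx qy).symm.trans (add_comm _ _)
  · rw [epair qx qy (px+1) (py+1) (by omega) (by omega)]
    exact (Ed px py).symm
  · rw [epair px py (qx+1) (qy+1) (by omega) (by omega), hsymm]
    exact (Ed qx qy).symm.trans (add_comm _ _)

lemma reachIn_mono {T T' : Set (ℤ×ℤ)} (h : T ⊆ T') {u v : ℤ×ℤ} (hr : reachIn T u v) :
    reachIn T' u v :=
  Relation.ReflTransGen.mono (p := fun a b => triAdj a b ∧ a ∈ T' ∧ b ∈ T')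
    (fun a b hab => ⟨hab.1, h hab.2.1, h hab.2.2⟩) _ _ hr

lemma zsum_eq {a b : ZMod 2} (h : a + b = 0) : a = b := by revert h; revert a b; decide

lemma boundary_reach (S : Set (ℤ×ℤ)) (hSconn : ∀ u ∈ S, ∀ v ∈ S, reachIn S u v)
    (u v : ℤ×ℤ) (hu : u ∉ S) (hv : v ∉ S)
    (su : ℤ×ℤ) (hsu : su ∈ S) (hadju : triAdj u su)
    (sv : ℤ×ℤ) (hsv : sv ∈ S) (hadjv : triAdj v sv)
    (hreach : reachIn Sᶜ u v) :
    reachIn {w | w ∉ S ∧ ∃ s ∈ S, triAdj w s} u v := by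
  classical
  set Bd : Set (ℤ×ℤ) := {w | w ∉ S ∧ ∃ s ∈ S, triAdj w s} with hBd
  set B1 : Set (ℤ×ℤ) := {w | w ∈ Bd ∧ reachIn Bd u w} with hB1
  have hB1S : ∀ w ∈ B1, w ∉ S := fun w hw => hw.1.1
  have huB1 : u ∈ B1 := ⟨⟨hu, su, hsu, hadju⟩, Relation.ReflTransGen.refl⟩
  have hnb : ∀ x y, triAdj x y → x ∈ Bd → y ∈ Bd → (x ∈ B1 ↔ y ∈ B1) := by
    intro x y hxy hxB hyB
    constructor
    · intro hx; exact ⟨hyB, hx.2.tail ⟨hxy, hxB, hyB⟩⟩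
    · intro hy; exact ⟨hxB, hy.2.tail ⟨triAdj_symm hxy, hyB, hxB⟩⟩
  set φ : ℤ×ℤ → ℤ×ℤ → ZMod 2 := fun p q =>
    if (p ∈ S ∧ q ∈ B1) ∨ (q ∈ S ∧ p ∈ B1) then 1 else 0 with hφ
  have hsymm : ∀ p q, φ p q = φ q p := by
    intro p q; simp only [hφ]; exact if_congr or_comm rfl rfl
  have φnn : ∀ p q, p ∉ S → q ∉ S → φ p q = 0 := by
    intro p q hp hq; simp only [hφ]
    exact if_neg (by rintro (⟨h1, _⟩|⟨h1, _⟩); exacts [hp h1, hq h1])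
  have φSS : ∀ p q, p ∈ S → q ∈ S → φ p q = 0 := by
    intro p q hp hq; simp only [hφ]
    exact if_neg (by rintro (⟨_, h1⟩|⟨_, h1⟩); exacts [hB1S _ h1 hq, hB1S _ h1 hp])
  have φSx : ∀ p q, p ∈ S → q ∉ S → φ p q = (if q ∈ B1 then 1 else 0) := by
    intro p q hp hq; simp only [hφ]
    congr 1
    simp only [eq_iff_iff]
    constructor
    · rintro (⟨_, h1⟩|⟨h1, _⟩); exacts [h1, absurd h1 hq]
    · intro h1; exact Or.inl ⟨hp, h1⟩
  have htri : ∀ p q r, triAdj p q → triAdj q r → triAdj p r →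
      φ p q + φ q r + φ p r = 0 := by
    intro p q r hpq hqr hpr
    have zz : ∀ a : ZMod 2, a + 0 + a = 0 := by decide
    have zz2 : ∀ a : ZMod 2, (0 : ZMod 2) + a + a = 0 := by decide
    have zz3 : ∀ a : ZMod 2, a + a + 0 = 0 := by decide
    by_cases hp : p ∈ S <;> by_cases hq : q ∈ S <;> by_cases hr : r ∈ S
    · rw [φSS p q hp hq, φSS q r hq hr, φSS p r hp hr]; norm_num
    · rw [φSS p q hp hq, φSx q r hq hr, φSx p r hp hr]; exact zz2 _
    · rw [φSx p q hp hq, hsymm q r, φSx r q hr hq, φSS p r hp hr]; exact zz3 _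
    · -- p ∈ S only
      rw [φSx p q hp hq, φnn q r hq hr, φSx p r hp hr]
      have hqB : q ∈ Bd := ⟨hq, p, hp, triAdj_symm hpq⟩
      have hrB : r ∈ Bd := ⟨hr, p, hp, triAdj_symm hpr⟩
      rw [if_congr (hnb q r hqr hqB hrB) rfl rfl]
      exact zz _
    · rw [hsymm p q, φSx q p hq hp, φSS q r hq hr, hsymm p r, φSx r p hr hp]
      exact zz _
    · -- q ∈ S only
      rw [hsymm p q, φSx q p hq hp, φSx q r hq hr, φnn p r hp hr]
      have hpB : p ∈ Bd := ⟨hp, q, hq, hpq⟩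
      have hrB : r ∈ Bd := ⟨hr, q, hq, triAdj_symm hqr⟩
      rw [if_congr (hnb p r hpr hpB hrB) rfl rfl]
      exact zz3 _
    · -- r ∈ S only
      rw [φnn p q hp hq, hsymm q r, φSx r q hr hq, hsymm p r, φSx r p hr hp]
      have hpB : p ∈ Bd := ⟨hp, r, hr, hpr⟩
      have hqB : q ∈ Bd := ⟨hq, r, hr, hqr⟩
      rw [if_congr (hnb q p (triAdj_symm hpq) hqB hpB) rfl rfl]
      exact zz2 _
    · rw [φnn p q hp hq, φnn q r hq hr, φnn p r hp hr]; norm_num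
  obtain ⟨h, hpot⟩ := exists_potential φ hsymm
    (fun x y => htri (x,y) (x+1,y) (x+1,y+1) (adj_e x y) (adj_n (x+1) y) (adj_ne x y))
    (fun x y => htri (x,y) (x,y+1) (x+1,y+1) (adj_n x y) (adj_e x (y+1)) (adj_ne x y))
  have hS0 : ∀ a b : ℤ×ℤ, reachIn S a b → h a = h b := by
    intro a b hab
    induction hab with
    | refl => rfl
    | tail hpre hstep ih =>
      obtain ⟨hadj, hbS, hcS⟩ := hstep
      exact ih.trans (zsum_eq (by rw [← hpot _ _ hadj]; exact φSS _ _ hbS hcS))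
  have hC0 : ∀ a b : ℤ×ℤ, reachIn Sᶜ a b → h a = h b := by
    intro a b hab
    induction hab with
    | refl => rfl
    | tail hpre hstep ih =>
      obtain ⟨hadj, hbS, hcS⟩ := hstep
      exact ih.trans (zsum_eq (by rw [← hpot _ _ hadj]; exact φnn _ _ hbS hcS))
  have e_u : h u + h su = 1 := by
    rw [← hpot u su hadju]
    simp only [hφ]
    exact if_pos (Or.inr ⟨hsu, huB1⟩)
  have e_v : h v + h sv = (if v ∈ B1 then 1 else 0) := by
    rw [← hpot v sv hadjv]
    exact φSx sv v hsv hv ▸ (hsymm v sv)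
  have h1 : h u = h v := hC0 u v hreach
  have h2 : h su = h sv := hS0 su sv (hSconn su hsu sv hsv)
  have : (if v ∈ B1 then (1:ZMod 2) else 0) = 1 := by
    rw [← e_v, ← h1, ← h2]; exact e_u
  by_cases hvB : v ∈ B1
  · exact hvB.2
  · rw [if_neg hvB] at this; exact absurd this (by decide)

/-- let `F : ℤ² → ℤ` change by exactly `1` across adjacent vertices in
different level sets; let `S` be a finite connected set on which `F` is constant and which
is a maximal level-set component (adjacent vertices outside `S` have different `F`-values),
and let `C` be the (unique) infinite connected component of the complement of `S`. Then all
vertices of `C` adjacent to `S` have `F`-values of the same parity; any two adjacent such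
vertices have equal `F`-value; and consequently any two such vertices lie in the same
level-set component of the complement of `S`, i.e. at most one level-set component is
exterior adjacent to `S`. -/
theorem at_most_one_exterior_adjacent_component
    (F : ℤ × ℤ → ℤ)
    (hF : ∀ u v, triAdj u v → F u = F v ∨ |F u - F v| = 1)
    (S : Set (ℤ × ℤ)) (hSfin : S.Finite)
    (hSconn : ∀ u ∈ S, ∀ v ∈ S, reachIn S u v)
    (hSconst : ∀ u ∈ S, ∀ v ∈ S, F u = F v)
    (hSmax : ∀ v ∉ S, ∀ s ∈ S, triAdj v s → F v ≠ F s)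
    (C : Set (ℤ × ℤ)) (hCsub : C ⊆ Sᶜ) (hCinf : C.Infinite)
    (hCconn : ∀ u ∈ C, ∀ v ∈ C, reachIn C u v)
    (hCcomp : ∀ u ∈ C, ∀ v, v ∉ S → triAdj u v → v ∈ C) :
    (∀ u ∈ C, ∀ v ∈ C, (∃ s ∈ S, triAdj u s) → (∃ s ∈ S, triAdj v s) →
      F u % 2 = F v % 2) ∧
    (∀ u ∈ C, ∀ v ∈ C, (∃ s ∈ S, triAdj u s) → (∃ s ∈ S, triAdj v s) →
      triAdj u v → F u = F v) ∧
    (∀ u ∈ C, ∀ v ∈ C, (∃ s ∈ S, triAdj u s) → (∃ s ∈ S, triAdj v s) →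
      reachIn {w | w ∉ S ∧ F w = F u} u v) := by
  -- basic: any vertex outside S adjacent to some s ∈ S has F-value at distance exactly 1
  have hdist : ∀ w, w ∉ S → ∀ s ∈ S, triAdj w s → F w - F s = 1 ∨ F w - F s = -1 := by
    intro w hw s hs hadj
    rcases hF w s hadj with he | habs
    · exact absurd he (hSmax w hw s hs hadj)
    · rcases (abs_eq (by norm_num : (0:ℤ) ≤ 1)).mp habs with h' | h'
      · exact Or.inl h'
      · exact Or.inr h'
  -- part 2 as a standalone statement about boundary vertices
  have hBdEq : ∀ x y : ℤ×ℤ, x ∉ S → y ∉ S → (∃ s ∈ S, triAdj x s) → (∃ s ∈ S, triAdj y s) →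
      triAdj x y → F x = F y := by
    intro x y hx hy ⟨s, hs, hxs⟩ ⟨t, ht, hyt⟩ hxy
    have h1 := hdist x hx s hs hxs
    have h2 := hdist y hy t ht hyt
    have h3 : F s = F t := hSconst s hs t ht
    rcases hF x y hxy with he | habs
    · exact he
    · rcases (abs_eq (by norm_num : (0:ℤ) ≤ 1)).mp habs with h' | h' <;> omega
  refine ⟨?_, ?_, ?_⟩
  · intro u hu v hv ⟨s, hs, hus⟩ ⟨t, ht, hvt⟩
    have hu' : u ∉ S := hCsub hu
    have hv' : v ∉ S := hCsub hv
    have h1 := hdist u hu' s hs hus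
    have h2 := hdist v hv' t ht hvt
    have h3 : F s = F t := hSconst s hs t ht
    omega
  · intro u hu v hv h1 h2 hadj
    exact hBdEq u v (hCsub hu) (hCsub hv) h1 h2 hadj
  · intro u hu v hv ⟨s, hs, hus⟩ ⟨t, ht, hvt⟩
    have hu' : u ∉ S := hCsub hu
    have hv' : v ∉ S := hCsub hv
    have hreach : reachIn Sᶜ u v := reachIn_mono hCsub (hCconn u hu v hv)
    have hkey := boundary_reach S hSconn u v hu' hv' s hs hus t ht hvt hreach
    -- convert a path in the boundary into a path in the level set of u
    have conv : ∀ y : ℤ×ℤ, reachIn {w | w ∉ S ∧ ∃ s ∈ S, triAdj w s} u y →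
        F y = F u ∧ reachIn {w | w ∉ S ∧ F w = F u} u y := by
      intro y hy
      induction hy with
      | refl => exact ⟨rfl, Relation.ReflTransGen.refl⟩
      | tail hpre hstep ih =>
        obtain ⟨hadj, hbB, hcB⟩ := hstep
        have hFeq : F _ = F _ := hBdEq _ _ hbB.1 hcB.1 hbB.2 hcB.2 hadj
        refine ⟨hFeq ▸ ih.1, ih.2.tail ⟨hadj, ⟨hbB.1, ih.1⟩, ⟨hcB.1, hFeq ▸ ih.1⟩⟩⟩
    exact (conv v hkey).2
end

section
/- Suppose the empirical measures (1/L) Σ_{i=1}^L δ_{λᵢ(L)/L} of strictly increasing integer tuples λ(L) = (λ₁ < ⋯ < λ_L) converge weakly as L → ∞ to a probability measure μ on ℝ with bounded support. Then σ(λ)² := (1/L)Σ(λᵢ/L)² − ((1/L)Σλᵢ/L)² − 1/12 converges to Var(μ) − 1/12, and this limit is ≥ 0, with equality if and only if μ is the uniform (Lebesgue) measure on an interval of length 1. -/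
open MeasureTheory Filter

namespace Sigma14

open Set

lemma sandwich {μ ν : Measure ℝ} [IsProbabilityMeasure μ] [IsProbabilityMeasure ν]
    (h : μ ≤ ν) : μ = ν := by
  ext s hs
  refine le_antisymm (h s) ?_
  have h2 : μ sᶜ ≤ ν sᶜ := h sᶜ
  have hμ : μ sᶜ = 1 - μ s := by
    rw [measure_compl hs (measure_ne_top μ s), measure_univ]
  have hν : ν sᶜ = 1 - ν s := by
    rw [measure_compl hs (measure_ne_top ν s), measure_univ]
  rw [hμ, hν] at h2
  exact (ENNReal.sub_le_sub_iff_left prob_le_one ENNReal.one_ne_top).mp h2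

lemma unif_prob (a : ℝ) : IsProbabilityMeasure (volume.restrict (Icc a (a+1))) := by
  constructor
  simp [Real.volume_Icc]

lemma unif_int (a : ℝ) : ∫ x in Icc a (a+1), x = a + 1/2 := by
  rw [MeasureTheory.integral_Icc_eq_integral_Ioc, ← intervalIntegral.integral_of_le (by linarith)]
  rw [integral_id]
  ring

lemma unif_int2 (a : ℝ) : ∫ x in Icc a (a+1), x^2 = a^2 + a + 1/3 := by
  rw [MeasureTheory.integral_Icc_eq_integral_Ioc, ← intervalIntegral.integral_of_le (by linarith)]
  rw [integral_pow]
  ring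

lemma mu_le_volume {μ : Measure ℝ} [IsProbabilityMeasure μ]
    (h : ∀ a b : ℝ, a ≤ b → μ (Ioc a b) ≤ ENNReal.ofReal (b - a)) : μ ≤ volume := by
  set F := ProbabilityTheory.cdf μ with hF
  have hIocF : ∀ a b : ℝ, μ (Ioc a b) = ENNReal.ofReal (F b - F a) := by
    intro a b
    conv_lhs => rw [← ProbabilityTheory.measure_cdf (μ := μ)]
    exact StieltjesFunction.measure_Ioc _ a b
  have hlip : ∀ a b : ℝ, a ≤ b → F b - F a ≤ b - a := by
    intro a b hab
    have h1 := h a b hab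
    rw [hIocF] at h1
    exact (ENNReal.ofReal_le_ofReal_iff (by linarith)).mp h1
  set G : StieltjesFunction ℝ :=
    { toFun := fun x => x - F x
      mono' := by
        intro a b hab
        have := hlip a b hab
        simp only
        linarith
      right_continuous' := fun x =>
        (continuous_id.continuousWithinAt).sub (F.right_continuous x) } with hG
  haveI : IsLocallyFiniteMeasure (μ + G.measure) :=
    ⟨fun x => by
      obtain ⟨s, hs, h1⟩ := μ.finiteAt_nhds x
      obtain ⟨t, ht, h2⟩ := G.measure.finiteAt_nhds x
      exact ⟨s ∩ t, Filter.inter_mem hs ht, by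
        rw [Measure.add_apply]
        exact ENNReal.add_lt_top.mpr
          ⟨lt_of_le_of_lt (measure_mono inter_subset_left) h1,
           lt_of_le_of_lt (measure_mono inter_subset_right) h2⟩⟩⟩
  have key : μ + G.measure = volume := by
    refine Measure.ext_of_Ioc _ _ ?_
    intro a b hab
    rw [Measure.add_apply, StieltjesFunction.measure_Ioc, hIocF, Real.volume_Ioc]
    have h1 : (0:ℝ) ≤ F b - F a := sub_nonneg.mpr (F.mono hab.le)
    have h2 : (0:ℝ) ≤ (b - F b) - (a - F a) := by
      have := hlip a b hab.le; linarith
    show ENNReal.ofReal (F b - F a) + ENNReal.ofReal ((b - F b) - (a - F a))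
        = ENNReal.ofReal (b - a)
    rw [← ENNReal.ofReal_add h1 h2]
    ring_nf
  calc μ ≤ μ + G.measure := Measure.le_add_right le_rfl
    _ = volume := key

lemma count_le {L : ℕ} (hL : 1 ≤ L) {f : Fin L → ℤ} (hf : Function.Injective f)
    {c d : ℝ} (hcd : c ≤ d) :
    ((Finset.univ.filter (fun i : Fin L => ((f i : ℤ) : ℝ) / L ∈ Icc c d)).card : ℝ)
      ≤ (d - c) * L + 1 := by
  classical
  have hL0 : (0:ℝ) < L := by exact_mod_cast hL
  have hsub : (Finset.univ.filter (fun i : Fin L => ((f i : ℤ) : ℝ) / L ∈ Icc c d)).card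
      ≤ (Finset.Icc ⌈c * L⌉ ⌊d * L⌋).card := by
    apply Finset.card_le_card_of_injOn f
    · intro i hi
      simp only [Finset.mem_coe, Finset.mem_filter, mem_Icc] at hi
      obtain ⟨h1, h2⟩ := hi.2
      have hcl : c * L ≤ ((f i : ℤ) : ℝ) := by
        rw [le_div_iff₀ hL0] at h1; linarith
      have hdl : ((f i : ℤ) : ℝ) ≤ d * L := by
        rw [div_le_iff₀ hL0] at h2; linarith
      simp only [Finset.mem_coe, Finset.mem_Icc]
      exact ⟨Int.ceil_le.mpr hcl, Int.le_floor.mpr hdl⟩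
    · exact fun a _ b _ h => hf h
  have hceil : ⌈c * L⌉ ≤ ⌊d * L⌋ + 1 := by
    have h1 : ⌈c * L⌉ ≤ ⌈d * L⌉ := Int.ceil_le_ceil (by nlinarith)
    have h2 : ⌈d * L⌉ ≤ ⌊d * L⌋ + 1 := Int.ceil_le_floor_add_one _
    omega
  have hcard : ((Finset.Icc ⌈c * L⌉ ⌊d * L⌋).card : ℝ)
      = ((⌊d * L⌋ + 1 - ⌈c * L⌉ : ℤ) : ℝ) := by
    rw [Int.card_Icc]
    have h0 : (0:ℤ) ≤ ⌊d * L⌋ + 1 - ⌈c * L⌉ := by omega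
    exact_mod_cast congrArg (fun z : ℤ => (z : ℝ)) (Int.toNat_of_nonneg h0)
  calc ((Finset.univ.filter (fun i : Fin L => ((f i : ℤ) : ℝ) / L ∈ Icc c d)).card : ℝ)
      ≤ ((Finset.Icc ⌈c * L⌉ ⌊d * L⌋).card : ℝ) := by exact_mod_cast hsub
    _ = ((⌊d * L⌋ + 1 - ⌈c * L⌉ : ℤ) : ℝ) := hcard
    _ ≤ (d - c) * L + 1 := by
        push_cast
        have h1 : ((⌊d * L⌋ : ℤ) : ℝ) ≤ d * L := Int.floor_le _
        have h2 : c * L ≤ ((⌈c * L⌉ : ℤ) : ℝ) := Int.le_ceil _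
        nlinarith

lemma mu_Icc_le
    (lam : (L : ℕ) → Fin L → ℤ)
    (hmono : ∀ L, StrictMono (lam L))
    (μ : Measure ℝ) [IsProbabilityMeasure μ]
    (hweak : ∀ f : BoundedContinuousFunction ℝ ℝ,
      Tendsto (fun L : ℕ => (1 / (L : ℝ)) * ∑ i : Fin L, f (((lam L i : ℤ) : ℝ) / L))
        atTop (nhds (∫ x, f x ∂μ)))
    {a b : ℝ} (hab : a ≤ b) : μ (Icc a b) ≤ ENNReal.ofReal (b - a) := by
  classical
  have hreal : (μ (Icc a b)).toReal ≤ b - a := by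
    refine le_of_forall_pos_le_add ?_
    intro ε' hε'
    set ε := ε' / 2 with hεdef
    have hε : 0 < ε := by positivity
    set φ : ℝ → ℝ := fun x => max 0 (min 1 (min ((x - (a - ε)) / ε) ((b + ε - x) / ε))) with hφ
    have hcont : Continuous φ := by
      apply continuous_const.max
      apply continuous_const.min
      apply Continuous.min
      · exact (continuous_id.sub continuous_const).div_const ε
      · exact (continuous_const.sub continuous_id).div_const ε
    have hφ0 : ∀ x, 0 ≤ φ x := fun x => le_max_left 0 _
    have hφ1 : ∀ x, φ x ≤ 1 := fun x => max_le zero_le_one (min_le_left _ _)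
    set F : BoundedContinuousFunction ℝ ℝ :=
      BoundedContinuousFunction.ofNormedAddCommGroup φ hcont 1
        (fun x => by rw [Real.norm_eq_abs, abs_le]; exact ⟨by linarith [hφ0 x], hφ1 x⟩) with hF
    have hind : ∀ x, (Icc a b).indicator (fun _ => (1:ℝ)) x ≤ φ x := by
      intro x
      by_cases hx : x ∈ Icc a b
      · rw [indicator_of_mem hx]
        obtain ⟨h1, h2⟩ := hx
        have t1 : (1:ℝ) ≤ (x - (a - ε)) / ε := by
          rw [le_div_iff₀ hε]; linarith
        have t2 : (1:ℝ) ≤ (b + ε - x) / ε := by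
          rw [le_div_iff₀ hε]; linarith
        calc (1:ℝ) ≤ min 1 (min ((x - (a - ε)) / ε) ((b + ε - x) / ε)) :=
              le_min le_rfl (le_min t1 t2)
          _ ≤ φ x := le_max_right _ _
      · rw [indicator_of_notMem hx]; exact hφ0 x
    have hstep1 : (μ (Icc a b)).toReal ≤ ∫ x, F x ∂μ := by
      have h1 : ∫ x, (Icc a b).indicator (fun _ => (1:ℝ)) x ∂μ = (μ (Icc a b)).toReal := by
        rw [integral_indicator measurableSet_Icc]
        simp [measureReal_def]
      rw [← h1]
      refine integral_mono ?_ (F.integrable μ) hind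
      · rw [integrable_indicator_iff measurableSet_Icc]
        exact integrableOn_const (measure_ne_top μ _)
    have hstep2 : ∫ x, F x ∂μ ≤ b - a + 2 * ε := by
      refine le_of_tendsto_of_tendsto (hweak F)
        (Tendsto.add (tendsto_const_nhds (x := b - a + 2*ε))
          tendsto_one_div_atTop_nhds_zero_nat) ?_ |>.trans (by norm_num)
      filter_upwards [eventually_ge_atTop 1] with L hL
      have hL0 : (0:ℝ) < L := by exact_mod_cast hL
      have hzero : ∀ x, x ∉ Icc (a - ε) (b + ε) → φ x = 0 := by
        intro x hx
        rw [mem_Icc, not_and_or, not_le, not_le] at hx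
        rcases hx with hx | hx
        · have t1 : (x - (a - ε)) / ε < 0 := div_neg_of_neg_of_pos (by linarith) hε
          have : min 1 (min ((x - (a - ε)) / ε) ((b + ε - x) / ε)) ≤ (x - (a - ε)) / ε :=
            (min_le_right _ _).trans (min_le_left _ _)
          exact max_eq_left (by linarith)
        · have t2 : (b + ε - x) / ε < 0 := div_neg_of_neg_of_pos (by linarith) hε
          have : min 1 (min ((x - (a - ε)) / ε) ((b + ε - x) / ε)) ≤ (b + ε - x) / ε :=
            (min_le_right _ _).trans (min_le_right _ _)
          exact max_eq_left (by linarith)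
      set T := Finset.univ.filter (fun i : Fin L => ((lam L i : ℤ) : ℝ) / L ∈ Icc (a - ε) (b + ε))
        with hT
      have hsum : ∑ i : Fin L, F (((lam L i : ℤ) : ℝ) / L) ≤ (T.card : ℝ) := by
        have he : ∑ i : Fin L, φ (((lam L i : ℤ) : ℝ) / L)
            = ∑ i ∈ T, φ (((lam L i : ℤ) : ℝ) / L) := by
          refine (Finset.sum_subset (Finset.filter_subset _ _) ?_).symm
          intro i _ hi
          simp only [Finset.mem_filter] at hi
          push_neg at hi
          exact hzero _ (hi (Finset.mem_univ i))
        calc ∑ i : Fin L, F (((lam L i : ℤ) : ℝ) / L)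
            = ∑ i ∈ T, φ (((lam L i : ℤ) : ℝ) / L) := he
          _ ≤ ∑ i ∈ T, (1:ℝ) := Finset.sum_le_sum (fun i _ => hφ1 _)
          _ = (T.card : ℝ) := by rw [Finset.sum_const]; simp
      have hcount : (T.card : ℝ) ≤ ((b + ε) - (a - ε)) * L + 1 :=
        count_le hL (hmono L).injective (by linarith)
      have : (1 / (L:ℝ)) * ∑ i : Fin L, F (((lam L i : ℤ) : ℝ) / L)
          ≤ (1 / (L:ℝ)) * (((b + ε) - (a - ε)) * L + 1) := by
        apply mul_le_mul_of_nonneg_left (hsum.trans hcount) (by positivity)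
      refine this.trans (le_of_eq ?_)
      have hLne : (L:ℝ) ≠ 0 := ne_of_gt hL0
      field_simp
      ring
    calc (μ (Icc a b)).toReal ≤ b - a + 2 * ε := hstep1.trans hstep2
      _ = (b - a) + ε' := by rw [hεdef]; ring
  have hne : μ (Icc a b) ≠ ⊤ := measure_ne_top μ _
  calc μ (Icc a b) = ENNReal.ofReal (μ (Icc a b)).toReal := (ENNReal.ofReal_toReal hne).symm
    _ ≤ ENNReal.ofReal (b - a) := ENNReal.ofReal_le_ofReal hreal

lemma unif_aux (m : ℝ) :
    ∫ x in Icc (m - 1/2) (m + 1/2), ((1:ℝ)/4 - (x - m)^2) = 1/6 := by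
  rw [MeasureTheory.integral_Icc_eq_integral_Ioc,
    ← intervalIntegral.integral_of_le (by linarith : m - 1/2 ≤ m + 1/2)]
  have hc1 : Continuous fun x : ℝ => (x - m)^2 := by fun_prop
  rw [intervalIntegral.integral_sub (intervalIntegrable_const)
    (hc1.intervalIntegrable _ _)]
  rw [intervalIntegral.integral_comp_sub_right (fun x => x^2) m]
  rw [intervalIntegral.integral_const, integral_pow]
  norm_num

lemma var_ge {μ : Measure ℝ} [IsProbabilityMeasure μ] (hle : μ ≤ volume)
    (hint1 : Integrable (fun x => x) μ) (hint2 : Integrable (fun x => x^2) μ) :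
    1/12 ≤ (∫ x, x^2 ∂μ) - (∫ x, x ∂μ)^2 ∧
    ((∫ x, x^2 ∂μ) - (∫ x, x ∂μ)^2 = 1/12 → ∃ a : ℝ, μ = volume.restrict (Icc a (a+1))) := by
  set m := ∫ x, x ∂μ with hm
  set g : ℝ → ℝ := fun x => (x - m)^2 with hg
  set I : Set ℝ := Icc (m - 1/2) (m + 1/2) with hI
  have hIm : MeasurableSet I := measurableSet_Icc
  have hg_int : Integrable g μ := by
    have h1 : Integrable (fun x : ℝ => x^2 - 2*m*x + m^2) μ :=
      (hint2.sub (hint1.const_mul (2*m))).add (integrable_const (m^2))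
    exact h1.congr (Filter.Eventually.of_forall (fun x => by simp only [hg]; ring))
  have hgint_eq : ∫ x, g x ∂μ = (∫ x, x^2 ∂μ) - m^2 := by
    have h1 : ∫ x, g x ∂μ = ∫ x, (x^2 - 2*m*x + m^2) ∂μ :=
      integral_congr_ae (Filter.Eventually.of_forall (fun x => by simp only [hg]; ring))
    have e1 : Integrable (fun x : ℝ => x^2 - 2*m*x) μ := hint2.sub (hint1.const_mul (2*m))
    rw [h1, integral_add e1 (integrable_const _),
      integral_sub hint2 (hint1.const_mul (2*m)), integral_const_mul, integral_const]
    simp [← hm]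
    ring
  set p := (μ I).toReal with hp
  set q := (μ Iᶜ).toReal with hq
  have hpq : p + q = 1 := by
    rw [hp, hq, ← ENNReal.toReal_add (measure_ne_top μ _) (measure_ne_top μ _),
      measure_add_measure_compl hIm, measure_univ, ENNReal.toReal_one]
  set A := ∫ x in I, g x ∂μ with hA
  set B := ∫ x in Iᶜ, g x ∂μ with hB
  have hsplit : ∫ x, g x ∂μ = A + B := (integral_add_compl hIm hg_int).symm
  have hBge : (1/4) * q ≤ B := by
    have h1 : ∫ x in Iᶜ, (1/4 : ℝ) ∂μ = (1/4) * q := by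
      rw [integral_const]
      simp [hq, Measure.restrict_apply_univ, mul_comm, measureReal_def]
    rw [← h1]
    refine setIntegral_mono_on (integrableOn_const (measure_ne_top _ _))
      hg_int.integrableOn hIm.compl ?_
    intro x hx
    rw [hI, mem_compl_iff, mem_Icc, not_and_or, not_le, not_le] at hx
    rcases hx with hx | hx <;> · simp only [hg]; nlinarith
  have hAineq : (1/4) * p - A ≤ 1/6 := by
    have hnn : ∀ x, 0 ≤ I.indicator (fun x => (1:ℝ)/4 - g x) x := by
      intro x
      by_cases hx : x ∈ I
      · rw [indicator_of_mem hx]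
        rw [hI, mem_Icc] at hx
        simp only [hg]; nlinarith [hx.1, hx.2]
      · rw [indicator_of_notMem hx]
    have hvol_int : Integrable (I.indicator (fun x => (1:ℝ)/4 - g x)) volume := by
      rw [integrable_indicator_iff hIm]
      exact (Continuous.integrableOn_Icc (by fun_prop))
    have hmono := integral_mono_measure hle (Filter.Eventually.of_forall hnn) hvol_int
    rw [integral_indicator hIm, integral_indicator hIm] at hmono
    have hμside : ∫ x in I, ((1:ℝ)/4 - g x) ∂μ = (1/4) * p - A := by
      rw [integral_sub (integrableOn_const (C := (1:ℝ)/4) (measure_ne_top _ _)) hg_int.integrableOn,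
        integral_const]
      simp [hp, Measure.restrict_apply_univ, mul_comm, measureReal_def, ← hA]
    have hvolside : ∫ x in I, ((1:ℝ)/4 - g x) = 1/6 := unif_aux m
    rw [hμside, hvolside] at hmono
    exact hmono
  constructor
  · rw [← hgint_eq, hsplit]; linarith
  · intro heq
    have hsum : A + B = 1/12 := by rw [← hsplit, hgint_eq]; linarith
    have hBeq : B = (1/4) * q := by linarith
    have hmuIc : μ Iᶜ = 0 := by
      have hzero : ∫ x in Iᶜ, (g x - 1/4) ∂μ = 0 := by
        rw [integral_sub hg_int.integrableOn (integrableOn_const (measure_ne_top _ _)),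
          integral_const]
        simp only [measureReal_def, Measure.restrict_apply_univ, smul_eq_mul, ← hq, ← hB]
        rw [hBeq]; ring
      have hnn : 0 ≤ᵐ[μ.restrict Iᶜ] fun x => g x - 1/4 := by
        rw [EventuallyLE, ae_restrict_iff' hIm.compl]
        refine Filter.Eventually.of_forall (fun x hx => ?_)
        rw [hI, mem_compl_iff, mem_Icc, not_and_or, not_le, not_le] at hx
        rcases hx with hx | hx <;> · simp only [hg, Pi.zero_apply]; nlinarith
      have hint : Integrable (fun x => g x - 1/4) (μ.restrict Iᶜ) :=
        hg_int.integrableOn.sub (integrableOn_const (measure_ne_top _ _))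
      have hae := (integral_eq_zero_iff_of_nonneg_ae hnn hint).mp hzero
      have h5 : ∀ᵐ x ∂μ, x ∈ Iᶜ → (fun x => g x - 1/4) x = 0 :=
        (ae_restrict_iff' hIm.compl).mp hae
      have h6 : ∀ᵐ x ∂μ, x ∉ Iᶜ := by
        refine h5.mono (fun x hx => ?_)
        intro hxc
        have := hx hxc
        rw [hI, mem_compl_iff, mem_Icc, not_and_or, not_le, not_le] at hxc
        simp only [hg] at this
        rcases hxc with h | h <;> nlinarith
      rw [ae_iff] at h6
      simpa [Set.compl_def] using h6
    have hle' : μ ≤ volume.restrict I := by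
      rw [Measure.le_iff]
      intro s hs
      have h1 : μ (s ∩ I) + μ (s \ I) = μ s := measure_inter_add_diff s hIm
      have h2 : μ (s \ I) = 0 :=
        measure_mono_null (fun x hx => hx.2) hmuIc
      have h3 : μ s = μ (s ∩ I) := by rw [← h1, h2, add_zero]
      rw [h3, Measure.restrict_apply hs]
      exact Measure.le_iff'.mp hle (s ∩ I)
    refine ⟨m - 1/2, ?_⟩
    have hI' : I = Icc (m - 1/2) ((m - 1/2) + 1) := by
      rw [hI]
      congr 1
      ring
    rw [hI'] at hle'
    haveI := unif_prob (m - 1/2)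
    exact sandwich hle'

end Sigma14

open Set Sigma14 in
/-- suppose the empirical measures `(1/L) Σᵢ δ_{λᵢ(L)/L}` of strictly
increasing integer tuples `λ(L)` (with uniformly bounded supports) converge weakly to a
probability measure `μ` with bounded support. Then
`σ(λ)² = (1/L)Σ(λᵢ/L)² − ((1/L)Σλᵢ/L)² − 1/12` converges to `Var(μ) − 1/12`, this limit is
nonnegative, and it vanishes iff `μ` is the uniform measure on an interval of length `1`. -/
theorem sigmaSq_tendsto_variance_sub_one_twelfth
    (lam : (L : ℕ) → Fin L → ℤ)
    (hmono : ∀ L, StrictMono (lam L))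
    (hbd : ∃ M : ℝ, ∀ (L : ℕ) (i : Fin L), |((lam L i : ℤ) : ℝ)| ≤ M * L)
    (μ : Measure ℝ) [IsProbabilityMeasure μ]
    (hsupp : ∃ M : ℝ, μ {x | M < |x|} = 0)
    (hweak : ∀ f : BoundedContinuousFunction ℝ ℝ,
      Tendsto (fun L : ℕ => (1 / (L : ℝ)) * ∑ i : Fin L, f (((lam L i : ℤ) : ℝ) / L))
        atTop (nhds (∫ x, f x ∂μ))) :
    Tendsto (fun L : ℕ =>
        (1 / (L : ℝ)) * ∑ i : Fin L, (((lam L i : ℤ) : ℝ) / L) ^ 2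
          - ((1 / (L : ℝ)) * ∑ i : Fin L, ((lam L i : ℤ) : ℝ) / L) ^ 2 - 1 / 12)
      atTop (nhds ((∫ x, x ^ 2 ∂μ) - (∫ x, x ∂μ) ^ 2 - 1 / 12)) ∧
    0 ≤ (∫ x, x ^ 2 ∂μ) - (∫ x, x ∂μ) ^ 2 - 1 / 12 ∧
    ((∫ x, x ^ 2 ∂μ) - (∫ x, x ∂μ) ^ 2 - 1 / 12 = 0 ↔
      ∃ a : ℝ, μ = volume.restrict (Set.Icc a (a + 1))) := by
  classical
  obtain ⟨M₁, hM₁⟩ := hbd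
  obtain ⟨M₂, hM₂⟩ := hsupp
  set R : ℝ := max (max M₁ M₂) 0 with hR
  have hR0 : 0 ≤ R := le_max_right _ _
  have hRM₁ : M₁ ≤ R := le_trans (le_max_left _ _) (le_max_left _ _)
  have hRM₂ : M₂ ≤ R := le_trans (le_max_right _ _) (le_max_left _ _)
  set c : ℝ → ℝ := fun x => max (-R) (min R x) with hc
  have hc_cont : Continuous c := continuous_const.max (continuous_const.min continuous_id)
  have hc_abs : ∀ x, |c x| ≤ R := by
    intro x
    rw [abs_le]
    constructor
    · exact le_max_left _ _
    · exact max_le (by linarith) (min_le_left _ _)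
  have hc_eq : ∀ x, |x| ≤ R → c x = x := by
    intro x hx
    rw [abs_le] at hx
    rw [hc]
    simp only
    rw [min_eq_right hx.2, max_eq_right hx.1]
  -- a.e. equality for μ
  have hae : ∀ᵐ x ∂μ, |x| ≤ M₂ := by
    rw [ae_iff]
    convert hM₂ using 2
    ext x
    simp
  -- lambda points are clamped identically
  have hlam_eq : ∀ (L : ℕ) (i : Fin L), c (((lam L i : ℤ) : ℝ) / L) = ((lam L i : ℤ) : ℝ) / L := by
    intro L i
    have hL0 : (0:ℝ) < L := by exact_mod_cast i.pos
    apply hc_eq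
    rw [abs_div, abs_of_pos hL0, div_le_iff₀ hL0]
    calc |((lam L i : ℤ) : ℝ)| ≤ M₁ * L := hM₁ L i
      _ ≤ R * L := by nlinarith
  -- bounded continuous versions of x and x^2
  set F1 : BoundedContinuousFunction ℝ ℝ :=
    BoundedContinuousFunction.ofNormedAddCommGroup c hc_cont R
      (fun x => by rw [Real.norm_eq_abs]; exact hc_abs x) with hF1
  set F2 : BoundedContinuousFunction ℝ ℝ :=
    BoundedContinuousFunction.ofNormedAddCommGroup (fun x => (c x)^2) (by fun_prop) (R^2)
      (fun x => by
        rw [Real.norm_eq_abs, abs_pow]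
        exact pow_le_pow_left₀ (abs_nonneg _) (hc_abs x) 2) with hF2
  have hF1int : ∫ x, F1 x ∂μ = ∫ x, x ∂μ := by
    refine integral_congr_ae (hae.mono (fun x hx => ?_))
    show c x = x
    exact hc_eq x (hx.trans hRM₂)
  have hF2int : ∫ x, F2 x ∂μ = ∫ x, x^2 ∂μ := by
    refine integral_congr_ae (hae.mono (fun x hx => ?_))
    show (c x)^2 = x^2
    rw [hc_eq x (hx.trans hRM₂)]
  have ht1 : Tendsto (fun L : ℕ => (1 / (L : ℝ)) * ∑ i : Fin L, ((lam L i : ℤ) : ℝ) / L)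
      atTop (nhds (∫ x, x ∂μ)) := by
    have he : (fun L : ℕ => (1 / (L : ℝ)) * ∑ i : Fin L, ((lam L i : ℤ) : ℝ) / L)
        = fun L : ℕ => (1 / (L : ℝ)) * ∑ i : Fin L, F1 (((lam L i : ℤ) : ℝ) / L) := by
      funext L
      congr 1
      exact Finset.sum_congr rfl (fun i _ => (hlam_eq L i).symm)
    rw [he, ← hF1int]
    exact hweak F1
  have ht2 : Tendsto (fun L : ℕ => (1 / (L : ℝ)) * ∑ i : Fin L, (((lam L i : ℤ) : ℝ) / L)^2)
      atTop (nhds (∫ x, x^2 ∂μ)) := by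
    have he : (fun L : ℕ => (1 / (L : ℝ)) * ∑ i : Fin L, (((lam L i : ℤ) : ℝ) / L)^2)
        = fun L : ℕ => (1 / (L : ℝ)) * ∑ i : Fin L, F2 (((lam L i : ℤ) : ℝ) / L) := by
      funext L
      congr 1
      refine Finset.sum_congr rfl (fun i _ => ?_)
      show _ = (c _)^2
      rw [hlam_eq L i]
    rw [he, ← hF2int]
    exact hweak F2
  have hconv : Tendsto (fun L : ℕ =>
        (1 / (L : ℝ)) * ∑ i : Fin L, (((lam L i : ℤ) : ℝ) / L) ^ 2
          - ((1 / (L : ℝ)) * ∑ i : Fin L, ((lam L i : ℤ) : ℝ) / L) ^ 2 - 1 / 12)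
      atTop (nhds ((∫ x, x ^ 2 ∂μ) - (∫ x, x ∂μ) ^ 2 - 1 / 12)) :=
    ((ht2.sub (ht1.pow 2)).sub tendsto_const_nhds)
  -- integrability
  have hmeas : AEStronglyMeasurable (fun x : ℝ => x) μ :=
    aestronglyMeasurable_id
  have hint1 : Integrable (fun x : ℝ => x) μ := by
    refine Integrable.mono' (integrable_const M₂) hmeas (hae.mono (fun x hx => ?_))
    rwa [Real.norm_eq_abs]
  have hint2 : Integrable (fun x : ℝ => x^2) μ := by
    refine Integrable.mono' (integrable_const (M₂^2)) (by fun_prop) (hae.mono (fun x hx => ?_))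
    rw [Real.norm_eq_abs, abs_pow]
    have h0 : (0:ℝ) ≤ |x| := abs_nonneg x
    nlinarith
  -- μ ≤ volume
  have hle : μ ≤ volume := by
    apply mu_le_volume
    intro a b hab
    calc μ (Ioc a b) ≤ μ (Icc a b) := measure_mono Ioc_subset_Icc_self
      _ ≤ ENNReal.ofReal (b - a) := mu_Icc_le lam hmono μ hweak hab
  obtain ⟨hge, heqcase⟩ := var_ge hle hint1 hint2
  refine ⟨hconv, by linarith, ?_, ?_⟩
  · intro h
    exact heqcase (by linarith)
  · rintro ⟨a, rfl⟩
    haveI := unif_prob a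
    rw [unif_int a, unif_int2 a]
    ring
end

section
/- Among all probability measures μ on ℝ that are absolutely continuous with density bounded above by 1, the variance Var(μ) = ∫x²dμ − (∫x dμ)² is at least 1/12, with equality exactly for the uniform measure on an interval of length 1. -/
open MeasureTheory


lemma uniform_calc (a : ℝ) :
    (∫ x, x ^ 2 ∂(volume.restrict (Set.Icc a (a + 1)))) -
      (∫ x, x ∂(volume.restrict (Set.Icc a (a + 1)))) ^ 2 = 1 / 12 := by
  have hab : a ≤ a + 1 := by linarith
  have h1 : (∫ x, x ∂(volume.restrict (Set.Icc a (a + 1)))) = a + 1 / 2 := by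
    have e1 : (∫ x, x ∂(volume.restrict (Set.Icc a (a + 1)))) = ∫ x in a..(a + 1), x := by
      rw [intervalIntegral.integral_of_le hab]
      exact MeasureTheory.integral_Icc_eq_integral_Ioc
    rw [e1, integral_id]; ring
  have h2 : (∫ x, x ^ 2 ∂(volume.restrict (Set.Icc a (a + 1)))) = ((a + 1) ^ 3 - a ^ 3) / 3 := by
    have e1 : (∫ x, x ^ 2 ∂(volume.restrict (Set.Icc a (a + 1)))) = ∫ x in a..(a + 1), x ^ 2 := by
      rw [intervalIntegral.integral_of_le hab]
      exact MeasureTheory.integral_Icc_eq_integral_Ioc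
    rw [e1, integral_pow]; norm_num
  rw [h1, h2]; ring


/-- bathtub principle for the variance: among probability measures on `ℝ`
absolutely continuous with density bounded by `1` and with finite second moment, the
variance is at least `1/12`, with equality exactly for the uniform measure on an interval
of length `1`. -/
theorem variance_ge_one_twelfth_of_density_le_one
    (μ : Measure ℝ) [IsProbabilityMeasure μ]
    (hac : μ ≪ volume) (hd : ∀ᵐ x ∂volume, μ.rnDeriv volume x ≤ 1)
    (hint : Integrable (fun x => x ^ 2) μ) :
    (1 / 12 : ℝ) ≤ (∫ x, x ^ 2 ∂μ) - (∫ x, x ∂μ) ^ 2 ∧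
    ((∫ x, x ^ 2 ∂μ) - (∫ x, x ∂μ) ^ 2 = 1 / 12 ↔
      ∃ a : ℝ, μ = volume.restrict (Set.Icc a (a + 1))) := by
  classical
  set f : ℝ → ℝ := fun x => (μ.rnDeriv volume x).toReal with hf_def
  have hf_nonneg : ∀ x, 0 ≤ f x := fun x => ENNReal.toReal_nonneg
  have hf_le : ∀ᵐ x ∂volume, f x ≤ 1 := by
    filter_upwards [hd] with x hx
    simpa using ENNReal.toReal_mono (by simp) hx
  have hf_int : Integrable f volume := Measure.integrable_toReal_rnDeriv
  have hf_one : (∫ x, f x) = 1 := by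
    rw [hf_def, Measure.integral_toReal_rnDeriv hac]; simp
  have key : ∀ φ : ℝ → ℝ, (∫ x, f x * φ x) = ∫ x, φ x ∂μ := by
    intro φ
    simpa [smul_eq_mul] using MeasureTheory.integral_rnDeriv_smul hac (f := φ)
  have keyInt : ∀ φ : ℝ → ℝ, Integrable φ μ → Integrable (fun x => f x * φ x) volume := by
    intro φ hφ
    simpa [smul_eq_mul] using (MeasureTheory.integrable_rnDeriv_smul_iff hac (f := φ)).mpr hφ
  have hxμ : Integrable (fun x : ℝ => x) μ := by
    refine ((integrable_const (1:ℝ)).add hint).mono' ?_ ?_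
    · exact measurable_id.aestronglyMeasurable
    · refine Filter.Eventually.of_forall fun x => ?_
      simp only [Real.norm_eq_abs, Pi.add_apply]
      nlinarith [sq_nonneg (|x| - 1), abs_nonneg x, sq_abs x]
  have hx2_int : Integrable (fun x => f x * x ^ 2) volume := keyInt _ hint
  have hx_int : Integrable (fun x => f x * x) volume := keyInt _ hxμ
  set m : ℝ := ∫ x, x ∂μ with hm
  set I : Set ℝ := Set.Icc (m - 1/2) (m + 1/2) with hI
  have hI_meas : MeasurableSet I := measurableSet_Icc
  set h : ℝ → ℝ := fun x => ((x - m) ^ 2 - 1/4) * (f x - I.indicator 1 x) with hh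
  have h_nonneg : ∀ᵐ x ∂volume, 0 ≤ h x := by
    filter_upwards [hf_le] with x hx
    by_cases hxI : x ∈ I
    · have h1 := hxI.1
      have h2 := hxI.2
      rw [hh]; simp only [Set.indicator_of_mem hxI, Pi.one_apply]
      nlinarith [mul_nonneg (neg_nonneg.2 (show ((x - m) ^ 2 - 1/4 : ℝ) ≤ 0 by nlinarith))
        (neg_nonneg.2 (show f x - 1 ≤ 0 by linarith))]
    · rw [hh]; simp only [Set.indicator_of_notMem hxI]
      have hx' : ¬(m - 1/2 ≤ x ∧ x ≤ m + 1/2) := hxI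
      push_neg at hx'
      apply mul_nonneg
      · rcases le_or_gt (m - 1/2) x with h1 | h1
        · nlinarith [hx' h1]
        · nlinarith
      · simpa using hf_nonneg x
  set ψ : ℝ → ℝ := fun x => x ^ 2 - 2 * m * x + (m ^ 2 - 1/4) with hψ
  have hψμ : Integrable ψ μ := (hint.sub (hxμ.const_mul (2 * m))).add (integrable_const _)
  have h_split : h = fun x =>
      f x * ψ x - I.indicator (fun x => (x - m) ^ 2 - 1/4) x := by
    funext x
    rw [hh, hψ]
    by_cases hxI : x ∈ I
    · simp only [Set.indicator_of_mem hxI, Pi.one_apply]; ring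
    · simp only [Set.indicator_of_notMem hxI]; ring
  have h1_int : Integrable (fun x => f x * ψ x) volume := keyInt _ hψμ
  have h2_int : Integrable (fun x => I.indicator (fun x => (x - m) ^ 2 - 1/4) x) volume := by
    rw [integrable_indicator_iff hI_meas]
    exact (((continuous_id.sub continuous_const).pow 2).sub continuous_const).integrableOn_Icc
  have h_int : Integrable h volume := by rw [h_split]; exact h1_int.sub h2_int
  have h2_val : (∫ x, I.indicator (fun x => (x - m) ^ 2 - 1/4) x) = -(1/6) := by
    rw [integral_indicator hI_meas, hI, MeasureTheory.integral_Icc_eq_integral_Ioc,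
      ← intervalIntegral.integral_of_le (by linarith)]
    have : (∫ x in (m - 1/2)..(m + 1/2), ((x - m) ^ 2 - 1/4)) =
        (∫ x in (m - 1/2)..(m + 1/2), (x - m) ^ 2) - ∫ x in (m - 1/2)..(m + 1/2), (1/4 : ℝ) := by
      rw [← intervalIntegral.integral_sub]
      · exact (((continuous_id.sub continuous_const).pow 2)).intervalIntegrable _ _
      · exact intervalIntegrable_const
    rw [this, intervalIntegral.integral_comp_sub_right (fun u => u ^ 2) m, integral_pow,
      intervalIntegral.integral_const]
    norm_num
  have h_val : (∫ x, h x) = (∫ x, x ^ 2 ∂μ) - m ^ 2 - 1/12 := by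
    have hψval : (∫ x, ψ x ∂μ) = (∫ x, x ^ 2 ∂μ) - m ^ 2 - 1/4 := by
      simp only [hψ]
      have hA : Integrable (fun x : ℝ => x ^ 2 - 2 * m * x) μ := hint.sub (hxμ.const_mul (2 * m))
      rw [integral_add hA (integrable_const _),
        integral_sub hint (hxμ.const_mul (2 * m)), integral_const_mul, integral_const,
        probReal_univ]
      simp only [ENNReal.toReal_one, one_smul, smul_eq_mul]
      ring
    rw [h_split, integral_sub h1_int h2_int, h2_val, key ψ, hψval]
    ring
  have h_ge : (0:ℝ) ≤ ∫ x, h x := integral_nonneg_of_ae h_nonneg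
  rw [h_val] at h_ge
  refine ⟨by linarith, ?_, ?_⟩
  · -- equality implies uniform
    intro heq
    have hzero : h =ᵐ[volume] 0 := by
      rw [← integral_eq_zero_iff_of_nonneg_ae h_nonneg h_int, h_val]
      linarith
    have hnull : volume ({m - 1/2, m + 1/2} : Set ℝ) = 0 :=
      Set.Finite.measure_zero (Set.toFinite _) volume
    have hnm : ∀ᵐ x ∂(volume : Measure ℝ), x ∉ ({m - 1/2, m + 1/2} : Set ℝ) :=
      measure_eq_zero_iff_ae_notMem.mp hnull
    have hfae : f =ᵐ[volume] I.indicator 1 := by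
      filter_upwards [hzero, hnm] with x hx hxs
      simp only [hh, Pi.zero_apply] at hx
      have hne : ((x - m) ^ 2 - 1/4) ≠ 0 := by
        intro h0
        apply hxs
        have hfac : (x - (m - 1/2)) * (x - (m + 1/2)) = 0 := by linear_combination h0
        rcases mul_eq_zero.mp hfac with hc | hc
        · left; linarith
        · right
          simp only [Set.mem_singleton_iff]
          linarith
      have := (mul_eq_zero.mp hx).resolve_left hne
      have := sub_eq_zero.mp this
      simpa using this
    have hrnae : μ.rnDeriv volume =ᵐ[volume] I.indicator 1 := by
      filter_upwards [hfae, hd] with x hx hx1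
      have hfin : μ.rnDeriv volume x ≠ ⊤ := ne_top_of_le_ne_top ENNReal.one_ne_top hx1
      rw [← ENNReal.ofReal_toReal hfin,
        show (μ.rnDeriv volume x).toReal = f x from rfl, hx]
      by_cases hxI : x ∈ I
      · simp [Set.indicator_of_mem hxI]
      · simp [Set.indicator_of_notMem hxI]
    have hμres : μ = volume.restrict I := by
      rw [← Measure.withDensity_rnDeriv_eq μ volume hac, withDensity_congr_ae hrnae,
        withDensity_indicator_one hI_meas]
    refine ⟨m - 1/2, ?_⟩
    rw [hμres, hI, show m - 1/2 + 1 = m + 1/2 by ring]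
  · -- uniform implies equality
    rintro ⟨a, hμa⟩
    show (∫ x, x ^ 2 ∂μ) - (∫ x, x ∂μ) ^ 2 = 1 / 12
    rw [hμa]
    exact uniform_calc a
end
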